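/- Let λ be a Young diagram, let x_1 < ⋯ < x_d be the contents of its addable boxes and y_1 < ⋯ < y_{d-1} the contents of its removable boxes. Then the pair has zero center, ∑_{k=1}^{d} x_k − ∑_{k=1}^{d-1} y_k = 0, and its area equals the number of boxes of λ: ∑_{1 ≤ i < j ≤ d} (y_i − x_i)(x_j − y_{j-1}) = |λ|. -/

import Mathlib

/-- A box `c ∉ μ` is addable if adjoining it to `μ` gives a Young diagram. -/
def Addable (μ : YoungDiagram) (c : ℕ × ℕ) : Prop :=
  c ∉ μ.cells ∧ ∃ ν : YoungDiagram, ν.cells = insert c μ.cells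

/-- A box `c ∈ μ` is removable if deleting it from `μ` leaves a Young diagram. -/
def Removable (μ : YoungDiagram) (c : ℕ × ℕ) : Prop :=
  c ∈ μ.cells ∧ ∃ ν : YoungDiagram, ν.cells = μ.cells.erase c

/-- The content `c(b) = j − i` of a box `b = (i,j)`, as a real number (0-indexed). -/
noncomputable def contentBox (b : ℕ × ℕ) : ℝ := (b.2 : ℝ) - (b.1 : ℝ)

open Finset

lemma addable_iff {lam : YoungDiagram} {i j : ℕ} :
    Addable lam (i, j) ↔ j = lam.rowLen i ∧ (i = 0 ∨ lam.rowLen i < lam.rowLen (i - 1)) := by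
  constructor
  · rintro ⟨hnot, ν, hν⟩
    have hmemν : ∀ p : ℕ × ℕ, p ∈ ν ↔ p = (i, j) ∨ p ∈ lam := by
      intro p
      rw [← YoungDiagram.mem_cells, hν, Finset.mem_insert, YoungDiagram.mem_cells]
    have hij : (i, j) ∈ ν := (hmemν _).2 (Or.inl rfl)
    have h1 : lam.rowLen i ≤ j := by
      by_contra h; push_neg at h
      exact hnot ((YoungDiagram.mem_cells _).2 (YoungDiagram.mem_iff_lt_rowLen.2 h))
    have h2 : j ≤ lam.rowLen i := by
      by_contra h; push_neg at h
      have hm : (i, lam.rowLen i) ∈ ν := ν.up_left_mem le_rfl h.le hij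
      rcases (hmemν _).1 hm with h' | h'
      · have := (Prod.ext_iff.1 h').2
        simp only at this; omega
      · exact absurd (YoungDiagram.mem_iff_lt_rowLen.1 h') (lt_irrefl _)
    have hj : j = lam.rowLen i := le_antisymm h2 h1
    refine ⟨hj, ?_⟩
    rcases Nat.eq_zero_or_pos i with h0 | h0
    · exact Or.inl h0
    · right
      have hm : (i - 1, j) ∈ ν := ν.up_left_mem (Nat.sub_le _ _) le_rfl hij
      rcases (hmemν _).1 hm with h' | h'
      · have := (Prod.ext_iff.1 h').1
        simp only at this; omega
      · have := YoungDiagram.mem_iff_lt_rowLen.1 h'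
        omega
  · rintro ⟨hj, hcond⟩
    subst hj
    have hnot : (i, lam.rowLen i) ∉ lam.cells := by
      rw [YoungDiagram.mem_cells, YoungDiagram.mem_iff_lt_rowLen]; omega
    refine ⟨hnot, ⟨insert (i, lam.rowLen i) lam.cells, ?_⟩, rfl⟩
    rw [Finset.coe_insert]
    rintro ⟨a, b⟩ ⟨c, e⟩ hab hmem
    rw [Prod.mk_le_mk] at hab
    obtain ⟨hac, hbe⟩ := hab
    rw [Set.mem_insert_iff] at hmem ⊢
    rcases hmem with hm | hm
    · obtain ⟨ha, hb⟩ := Prod.ext_iff.1 hm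
      simp only at ha hb
      have hci : c ≤ i := ha ▸ hac
      have hei : e ≤ lam.rowLen i := hb ▸ hbe
      by_cases hq : c = i
      · by_cases he : e = lam.rowLen i
        · left; rw [hq, he]
        · right
          rw [Finset.mem_coe, YoungDiagram.mem_cells, YoungDiagram.mem_iff_lt_rowLen, hq]
          omega
      · right
        rw [Finset.mem_coe, YoungDiagram.mem_cells, YoungDiagram.mem_iff_lt_rowLen]
        have hclt : c < i := lt_of_le_of_ne hci hq
        have h2 : lam.rowLen (i - 1) ≤ lam.rowLen c := lam.rowLen_anti _ _ (by omega)
        have h1 : lam.rowLen i < lam.rowLen (i - 1) := by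
          rcases hcond with h | h
          · omega
          · exact h
        omega
    · exact Or.inr (lam.isLowerSet (Prod.mk_le_mk.2 ⟨hac, hbe⟩) hm)

lemma removable_iff {lam : YoungDiagram} {i j : ℕ} :
    Removable lam (i, j) ↔ j + 1 = lam.rowLen i ∧ lam.rowLen (i + 1) < lam.rowLen i := by
  constructor
  · rintro ⟨hmem, ν, hν⟩
    have hmemν : ∀ p : ℕ × ℕ, p ∈ ν ↔ p ∈ lam ∧ p ≠ (i, j) := by
      intro p
      rw [← YoungDiagram.mem_cells, hν, Finset.mem_erase, YoungDiagram.mem_cells, and_comm]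
    have hjlt : j < lam.rowLen i := YoungDiagram.mem_iff_lt_rowLen.1 hmem
    constructor
    · by_contra h
      have hj1 : j + 1 < lam.rowLen i := by omega
      have h1 : (i, j + 1) ∈ ν := (hmemν _).2 ⟨YoungDiagram.mem_iff_lt_rowLen.2 hj1, by simp⟩
      have h2 : (i, j) ∈ ν := ν.up_left_mem le_rfl (by omega) h1
      exact ((hmemν _).1 h2).2 rfl
    · by_contra h
      have hj1 : j < lam.rowLen (i + 1) := by
        have := lam.rowLen_anti i (i + 1) (by omega); omega
      have h1 : (i + 1, j) ∈ ν := (hmemν _).2 ⟨YoungDiagram.mem_iff_lt_rowLen.2 hj1, by simp⟩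
      have h2 : (i, j) ∈ ν := ν.up_left_mem (by omega) le_rfl h1
      exact ((hmemν _).1 h2).2 rfl
  · rintro ⟨hj, hlt⟩
    have hmem : (i, j) ∈ lam.cells := by
      rw [YoungDiagram.mem_cells, YoungDiagram.mem_iff_lt_rowLen]; omega
    refine ⟨hmem, ⟨lam.cells.erase (i, j), ?_⟩, rfl⟩
    rw [Finset.coe_erase]
    rintro ⟨a, b⟩ ⟨c, e⟩ hab hm
    rw [Prod.mk_le_mk] at hab
    obtain ⟨hac, hbe⟩ := hab
    obtain ⟨hmem', hne⟩ := hm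
    rw [Finset.mem_coe, YoungDiagram.mem_cells, YoungDiagram.mem_iff_lt_rowLen] at hmem'
    constructor
    · rw [Finset.mem_coe, YoungDiagram.mem_cells, YoungDiagram.mem_iff_lt_rowLen]
      calc e ≤ b := hbe
        _ < lam.rowLen a := hmem'
        _ ≤ lam.rowLen c := lam.rowLen_anti _ _ hac
    · simp only [Set.mem_singleton_iff] at hne ⊢
      intro hq
      obtain ⟨hc, he⟩ := Prod.ext_iff.1 hq
      simp only at hc he
      apply hne
      -- c = i, e = j; show (a,b) = (i,j)
      subst hc; subst he
      have h1 : lam.rowLen a ≤ lam.rowLen c := lam.rowLen_anti _ _ hac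
      have h2 : b < lam.rowLen a := hmem'
      rcases Nat.lt_or_ge a (c + 1) with hle | hge
      · have ha : a = c := by omega
        have hb : b = e := by omega
        rw [ha, hb]
      · have h4 : lam.rowLen a ≤ lam.rowLen (c + 1) := lam.rowLen_anti _ _ hge
        omega

lemma card_eq_sum_rowLen (lam : YoungDiagram) (N : ℕ) (hN : lam.rowLen N = 0) :
    lam.card = ∑ i ∈ Finset.range N, lam.rowLen i := by
  have := Finset.card_eq_sum_card_fiberwise (f := Prod.fst)
    (s := lam.cells) (t := Finset.range N) ?_
  · rw [YoungDiagram.card]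
    rw [this]
    refine Finset.sum_congr rfl fun i _ => ?_
    rw [lam.rowLen_eq_card]
    congr 1
  · intro c hc
    rw [Finset.mem_coe, Finset.mem_range]
    by_contra h
    push_neg at h
    have h1 : lam.rowLen c.1 ≤ lam.rowLen N := lam.rowLen_anti _ _ h
    have h2 : c.2 < lam.rowLen c.1 := by
      rw [← YoungDiagram.mem_iff_lt_rowLen]
      exact hc
    omega

section Main

variable (lam : YoungDiagram)

/-- real content of row-i addable box -/
noncomputable def zc (lam : YoungDiagram) (i : ℕ) : ℝ := (lam.rowLen i : ℝ) - (i : ℝ)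

lemma zc_inj {lam : YoungDiagram} {a b : ℕ} (h : zc lam a = zc lam b) : a = b := by
  rcases lt_trichotomy a b with hab | hab | hab
  · have h1 : lam.rowLen b ≤ lam.rowLen a := lam.rowLen_anti _ _ hab.le
    have h2 : (lam.rowLen b : ℝ) ≤ (lam.rowLen a : ℝ) := Nat.cast_le.2 h1
    have h3 : (a : ℝ) < (b : ℝ) := Nat.cast_lt.2 hab
    simp only [zc] at h; linarith
  · exact hab
  · have h1 : lam.rowLen a ≤ lam.rowLen b := lam.rowLen_anti _ _ hab.le
    have h2 : (lam.rowLen a : ℝ) ≤ (lam.rowLen b : ℝ) := Nat.cast_le.2 h1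
    have h3 : (b : ℝ) < (a : ℝ) := Nat.cast_lt.2 hab
    simp only [zc] at h; linarith

noncomputable def addSet (lam : YoungDiagram) (N : ℕ) : Finset ℕ :=
  (Finset.range (N + 1)).filter (fun i => i = 0 ∨ lam.rowLen i < lam.rowLen (i - 1))

noncomputable def remSet (lam : YoungDiagram) (N : ℕ) : Finset ℕ :=
  (Finset.range N).filter (fun i => lam.rowLen (i + 1) < lam.rowLen i)

lemma rowLen_colLen_zero (lam : YoungDiagram) : lam.rowLen (lam.colLen 0) = 0 := by
  by_contra h
  have h1 : (lam.colLen 0, 0) ∈ lam := YoungDiagram.mem_iff_lt_rowLen.2 (by omega)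
  have h2 := YoungDiagram.mem_iff_lt_colLen.1 h1
  omega

lemma key_sum (N : ℕ) (hN : lam.rowLen N = 0) (f : ℝ → ℝ) :
    ∑ i ∈ addSet lam N, f (zc lam i) - ∑ i ∈ remSet lam N, f (zc lam i - 1)
    = f (zc lam 0) + ∑ i ∈ Finset.range N, (f (zc lam (i + 1)) - f (zc lam i - 1)) := by
  have h0 : (0 : ℕ) ∈ addSet lam N := by
    simp [addSet]
  have hsplit : ∑ i ∈ addSet lam N, f (zc lam i)
      = f (zc lam 0) + ∑ i ∈ (addSet lam N).erase 0, f (zc lam i) :=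
    (Finset.add_sum_erase _ _ h0).symm
  have hbij : ∑ i ∈ (addSet lam N).erase 0, f (zc lam i)
      = ∑ i ∈ remSet lam N, f (zc lam (i + 1)) := by
    refine Finset.sum_bij (fun a _ => a - 1) ?_ ?_ ?_ ?_
    · intro a ha
      simp only [addSet, Finset.mem_erase, Finset.mem_filter, Finset.mem_range] at ha
      obtain ⟨ha0, haN, hcond⟩ := ha
      have hlt : lam.rowLen a < lam.rowLen (a - 1) := by
        rcases hcond with h | h
        · exact absurd h ha0
        · exact h
      simp only [remSet, Finset.mem_filter, Finset.mem_range]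
      have ha1 : a - 1 + 1 = a := by omega
      constructor
      · omega
      · rw [ha1]; exact hlt
    · intro a₁ ha₁ a₂ ha₂ h
      simp only [addSet, Finset.mem_erase, Finset.mem_filter, Finset.mem_range] at ha₁ ha₂
      have h' : a₁ - 1 = a₂ - 1 := h
      omega
    · intro b hb
      simp only [remSet, Finset.mem_filter, Finset.mem_range] at hb
      refine ⟨b + 1, ?_, by simp⟩
      simp only [addSet, Finset.mem_erase, Finset.mem_filter, Finset.mem_range]
      refine ⟨by omega, by omega, Or.inr ?_⟩
      simpa using hb.2
    · intro a ha
      simp only [addSet, Finset.mem_erase, Finset.mem_filter, Finset.mem_range] at ha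
      have ha1 : a - 1 + 1 = a := by omega
      rw [ha1]
  have hextend : ∑ i ∈ remSet lam N, (f (zc lam (i + 1)) - f (zc lam i - 1))
      = ∑ i ∈ Finset.range N, (f (zc lam (i + 1)) - f (zc lam i - 1)) := by
    refine Finset.sum_subset (Finset.filter_subset _ _) ?_
    intro i hi hni
    simp only [remSet, Finset.mem_filter, Finset.mem_range] at hni
    rw [Finset.mem_range] at hi
    have h1 : lam.rowLen (i + 1) ≤ lam.rowLen i := lam.rowLen_anti _ _ (by omega)
    have h2 : lam.rowLen (i + 1) = lam.rowLen i := by omega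
    have h3 : zc lam (i + 1) = zc lam i - 1 := by
      simp only [zc, h2]; push_cast; ring
    rw [h3]; ring
  rw [hsplit, hbij, ← hextend, Finset.sum_sub_distrib]
  ring


lemma sum_id (N : ℕ) (hN : lam.rowLen N = 0) :
    ∑ i ∈ addSet lam N, zc lam i - ∑ i ∈ remSet lam N, (zc lam i - 1) = 0 := by
  have h := key_sum lam N hN (f := fun t => t)
  rw [h]
  have e1 : ∀ i : ℕ, zc lam (i + 1) - (zc lam i - 1) = (zc lam (i + 1) - zc lam i) + 1 := by
    intro i; ring
  rw [Finset.sum_congr rfl (fun i _ => e1 i), Finset.sum_add_distrib,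
    Finset.sum_range_sub (fun i => zc lam i) N, Finset.sum_const, Finset.card_range]
  have hzN : zc lam N = -(N : ℝ) := by simp [zc, hN]
  rw [hzN]
  push_cast
  ring

lemma sum_sq (N : ℕ) (hN : lam.rowLen N = 0) :
    ∑ i ∈ addSet lam N, (zc lam i) ^ 2 - ∑ i ∈ remSet lam N, (zc lam i - 1) ^ 2
      = 2 * (lam.card : ℝ) := by
  have h := key_sum lam N hN (f := fun t => t ^ 2)
  rw [h]
  have e1 : ∀ i : ℕ, (zc lam (i + 1)) ^ 2 - (zc lam i - 1) ^ 2
      = (((lam.rowLen (i + 1) : ℝ)) ^ 2 - ((lam.rowLen i : ℝ)) ^ 2)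
        - 2 * (((i + 1 : ℕ) : ℝ) * (lam.rowLen (i + 1) : ℝ) - ((i : ℕ) : ℝ) * (lam.rowLen i : ℝ))
        + 2 * (lam.rowLen i : ℝ) := by
    intro i; simp only [zc]; push_cast; ring
  rw [Finset.sum_congr rfl (fun i _ => e1 i)]
  rw [Finset.sum_add_distrib, Finset.sum_sub_distrib, ← Finset.mul_sum, ← Finset.mul_sum,
    Finset.sum_range_sub (fun i => ((lam.rowLen i : ℝ)) ^ 2) N,
    Finset.sum_range_sub (fun i => ((i : ℕ) : ℝ) * (lam.rowLen i : ℝ)) N]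
  have hcard : ∑ i ∈ Finset.range N, (lam.rowLen i : ℝ) = (lam.card : ℝ) := by
    rw [card_eq_sum_rowLen lam N hN]
    push_cast
    rfl
  rw [hcard, hN]
  simp [zc, hN]

end Main

lemma area_identity (x y : ℕ → ℝ) (n : ℕ) :
    ∑ i ∈ Finset.Icc 1 (n + 1), ∑ j ∈ Finset.Icc (i + 1) (n + 1), (y i - x i) * (x j - y (j - 1))
      = (∑ k ∈ Finset.Icc 1 (n + 1), (x k) ^ 2 - ∑ k ∈ Finset.Icc 1 n, (y k) ^ 2) / 2
        - (∑ k ∈ Finset.Icc 1 (n + 1), x k - ∑ k ∈ Finset.Icc 1 n, y k) ^ 2 / 2 := by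
  induction n with
  | zero => simp
  | succ n ih =>
    have houter : ∀ f : ℕ → ℝ, ∑ k ∈ Finset.Icc 1 (n + 2), f k
        = ∑ k ∈ Finset.Icc 1 (n + 1), f k + f (n + 2) := by
      intro f
      exact Finset.sum_Icc_succ_top (by omega) f
    have hinner : ∀ i, i ∈ Finset.Icc 1 (n + 1) →
        ∑ j ∈ Finset.Icc (i + 1) (n + 2), (y i - x i) * (x j - y (j - 1))
        = ∑ j ∈ Finset.Icc (i + 1) (n + 1), (y i - x i) * (x j - y (j - 1))
          + (y i - x i) * (x (n + 2) - y (n + 1)) := by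
      intro i hi
      rw [Finset.mem_Icc] at hi
      rw [Finset.sum_Icc_succ_top (by omega)]
      norm_num
    rw [houter]
    rw [Finset.sum_congr rfl hinner, Finset.sum_add_distrib, ih]
    rw [houter x, houter (fun k => (x k) ^ 2), Finset.sum_Icc_succ_top (by omega : 1 ≤ n + 1) y,
      Finset.sum_Icc_succ_top (by omega : 1 ≤ n + 1) (fun k => (y k) ^ 2)]
    have hempty : ∑ j ∈ Finset.Icc (n + 2 + 1) (n + 2), (y (n+2) - x (n+2)) * (x j - y (j - 1)) = 0 := by
      rw [Finset.Icc_eq_empty (by omega)]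
      simp
    rw [hempty, ← Finset.sum_mul, Finset.sum_sub_distrib,
      Finset.sum_Icc_succ_top (by omega : 1 ≤ n + 1) y,
      Finset.sum_Icc_succ_top (by omega : 1 ≤ n + 1) x]
    ring

/-- For a Young diagram `λ` with addable contents `x₁ < ⋯ < x_d` and removable contents
`y₁ < ⋯ < y_{d−1}`: the pair has zero center, `∑ x_k − ∑ y_k = 0`, and its area equals the
number of boxes: `∑_{1≤i<j≤d} (y_i − x_i)(x_j − y_{j-1}) = |λ|`. -/
theorem young_diagram_center_zero_area_card (lam : YoungDiagram)
    (d : ℕ) (hd : 1 ≤ d) (x y : ℕ → ℝ)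
    -- the sequences interlace: x₁ < y₁ < x₂ < ⋯ < y_{d-1} < x_d
    (hinter : ∀ m, 1 ≤ m → m ≤ d - 1 → x m < y m ∧ y m < x (m + 1))
    -- x₁,…,x_d are exactly the contents of the addable boxes of λ
    (hx1 : ∀ m, 1 ≤ m → m ≤ d → ∃ c, Addable lam c ∧ contentBox c = x m)
    (hx2 : ∀ c, Addable lam c → ∃ m, 1 ≤ m ∧ m ≤ d ∧ contentBox c = x m)
    -- y₁,…,y_{d-1} are exactly the contents of the removable boxes of λ
    (hy1 : ∀ m, 1 ≤ m → m ≤ d - 1 → ∃ c, Removable lam c ∧ contentBox c = y m)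
    (hy2 : ∀ c, Removable lam c → ∃ m, 1 ≤ m ∧ m ≤ d - 1 ∧ contentBox c = y m) :
    (∑ k ∈ Finset.Icc 1 d, x k - ∑ k ∈ Finset.Icc 1 (d - 1), y k = 0) ∧
    (∑ i ∈ Finset.Icc 1 d, ∑ j ∈ Finset.Icc (i + 1) d, (y i - x i) * (x j - y (j - 1)) =
      (lam.card : ℝ)) := by
  set N := lam.colLen 0 with hNdef
  have hN : lam.rowLen N = 0 := rowLen_colLen_zero lam
  -- strict monotonicity of x and y
  have xlt : ∀ a b, 1 ≤ a → a < b → b ≤ d → x a < x b := by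
    intro a b
    induction b with
    | zero => omega
    | succ b ih =>
      intro ha hab hbd
      rcases Nat.lt_or_ge a b with h | h
      · have h1 := ih ha h (by omega)
        have h2 := hinter b (by omega) (by omega)
        linarith [h2.1, h2.2]
      · have haeq : a = b := by omega
        subst haeq
        have h2 := hinter a ha (by omega)
        linarith [h2.1, h2.2]
  have ylt : ∀ a b, 1 ≤ a → a < b → b ≤ d - 1 → y a < y b := by
    intro a b
    induction b with
    | zero => omega
    | succ b ih =>
      intro ha hab hbd
      have h2 := hinter b (by omega) (by omega)
      have h3 := hinter (b + 1) (by omega) (by omega)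
      rcases Nat.lt_or_ge a b with h | h
      · have h1 := ih ha h (by omega)
        linarith [h2.1, h2.2, h3.1, h3.2]
      · have haeq : a = b := by omega
        subst haeq
        linarith [h2.1, h2.2, h3.1, h3.2]
  have xinj : ∀ a b, 1 ≤ a → a ≤ d → 1 ≤ b → b ≤ d → x a = x b → a = b := by
    intro a b ha1 ha2 hb1 hb2 h
    rcases lt_trichotomy a b with hab | hab | hab
    · have := xlt a b ha1 hab hb2; linarith
    · exact hab
    · have := xlt b a hb1 hab ha2; linarith
  have yinj : ∀ a b, 1 ≤ a → a ≤ d - 1 → 1 ≤ b → b ≤ d - 1 → y a = y b → a = b := by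
    intro a b ha1 ha2 hb1 hb2 h
    rcases lt_trichotomy a b with hab | hab | hab
    · have := ylt a b ha1 hab hb2; linarith
    · exact hab
    · have := ylt b a hb1 hab ha2; linarith
  -- addable/removable boxes from the index sets
  have haddable : ∀ a ∈ addSet lam N, Addable lam (a, lam.rowLen a) := by
    intro a ha
    simp only [addSet, Finset.mem_filter, Finset.mem_range] at ha
    exact addable_iff.2 ⟨rfl, ha.2⟩
  have hrem1 : ∀ a ∈ remSet lam N, 1 ≤ lam.rowLen a := by
    intro a ha
    simp only [remSet, Finset.mem_filter, Finset.mem_range] at ha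
    omega
  have hremovable : ∀ a ∈ remSet lam N, Removable lam (a, lam.rowLen a - 1) := by
    intro a ha
    have h1 := hrem1 a ha
    simp only [remSet, Finset.mem_filter, Finset.mem_range] at ha
    exact removable_iff.2 ⟨by omega, ha.2⟩
  have hcontA : ∀ a : ℕ, contentBox (a, lam.rowLen a) = zc lam a := by
    intro a; simp [contentBox, zc]
  have hcontR : ∀ a ∈ remSet lam N, contentBox (a, lam.rowLen a - 1) = zc lam a - 1 := by
    intro a ha
    have h1 := hrem1 a ha
    simp only [contentBox, zc]
    push_cast [Nat.cast_sub h1]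
    ring
  -- transfer of sums
  have htransX : ∀ f : ℝ → ℝ, ∑ i ∈ addSet lam N, f (zc lam i) = ∑ m ∈ Finset.Icc 1 d, f (x m) := by
    intro f
    refine Finset.sum_bij (fun a ha => (hx2 _ (haddable a ha)).choose) ?_ ?_ ?_ ?_
    · intro a ha
      obtain ⟨h1, h2, h3⟩ := (hx2 _ (haddable a ha)).choose_spec
      rw [Finset.mem_Icc]; exact ⟨h1, h2⟩
    · intro a₁ ha₁ a₂ ha₂ h
      obtain ⟨h1, h2, h3⟩ := (hx2 _ (haddable a₁ ha₁)).choose_spec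
      obtain ⟨h1', h2', h3'⟩ := (hx2 _ (haddable a₂ ha₂)).choose_spec
      have h' : (hx2 _ (haddable a₁ ha₁)).choose = (hx2 _ (haddable a₂ ha₂)).choose := h
      apply zc_inj (lam := lam)
      rw [← hcontA a₁, ← hcontA a₂, h3, h3', h']
    · intro m hm
      rw [Finset.mem_Icc] at hm
      obtain ⟨c, hc, hcc⟩ := hx1 m hm.1 hm.2
      obtain ⟨i, j⟩ := c
      obtain ⟨hj, hcond⟩ := addable_iff.1 hc
      have hiN : i < N + 1 := by
        by_contra hcon
        push_neg at hcon
        have hle : lam.rowLen (i - 1) ≤ lam.rowLen N := lam.rowLen_anti _ _ (by omega)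
        rcases hcond with h | h <;> omega
      have hia : i ∈ addSet lam N := by
        simp only [addSet, Finset.mem_filter, Finset.mem_range]
        exact ⟨hiN, hcond⟩
      refine ⟨i, hia, ?_⟩
      show (hx2 _ (haddable i hia)).choose = m
      obtain ⟨h1, h2, h3⟩ := (hx2 _ (haddable i hia)).choose_spec
      apply xinj _ _ h1 h2 hm.1 hm.2
      rw [← h3, ← hcc, hj]
    · intro a ha
      obtain ⟨h1, h2, h3⟩ := (hx2 _ (haddable a ha)).choose_spec
      show f (zc lam a) = f (x ((hx2 _ (haddable a ha)).choose))
      rw [← h3, hcontA]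
  have htransY : ∀ f : ℝ → ℝ,
      ∑ i ∈ remSet lam N, f (zc lam i - 1) = ∑ m ∈ Finset.Icc 1 (d - 1), f (y m) := by
    intro f
    refine Finset.sum_bij (fun a ha => (hy2 _ (hremovable a ha)).choose) ?_ ?_ ?_ ?_
    · intro a ha
      obtain ⟨h1, h2, h3⟩ := (hy2 _ (hremovable a ha)).choose_spec
      rw [Finset.mem_Icc]; exact ⟨h1, h2⟩
    · intro a₁ ha₁ a₂ ha₂ h
      obtain ⟨h1, h2, h3⟩ := (hy2 _ (hremovable a₁ ha₁)).choose_spec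
      obtain ⟨h1', h2', h3'⟩ := (hy2 _ (hremovable a₂ ha₂)).choose_spec
      have h' : (hy2 _ (hremovable a₁ ha₁)).choose = (hy2 _ (hremovable a₂ ha₂)).choose := h
      apply zc_inj (lam := lam)
      have e : zc lam a₁ - 1 = zc lam a₂ - 1 := by
        rw [← hcontR a₁ ha₁, ← hcontR a₂ ha₂, h3, h3', h']
      linarith
    · intro m hm
      rw [Finset.mem_Icc] at hm
      obtain ⟨c, hc, hcc⟩ := hy1 m hm.1 hm.2
      obtain ⟨i, j⟩ := c
      obtain ⟨hj, hcond⟩ := removable_iff.1 hc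
      have hiN : i < N := by
        by_contra hcon
        push_neg at hcon
        have hle : lam.rowLen i ≤ lam.rowLen N := lam.rowLen_anti _ _ hcon
        omega
      have hia : i ∈ remSet lam N := by
        simp only [remSet, Finset.mem_filter, Finset.mem_range]
        exact ⟨hiN, hcond⟩
      refine ⟨i, hia, ?_⟩
      show (hy2 _ (hremovable i hia)).choose = m
      obtain ⟨h1, h2, h3⟩ := (hy2 _ (hremovable i hia)).choose_spec
      apply yinj _ _ h1 h2 hm.1 hm.2
      have hjj : j = lam.rowLen i - 1 := by omega
      rw [← h3, ← hcc, hjj]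
    · intro a ha
      obtain ⟨h1, h2, h3⟩ := (hy2 _ (hremovable a ha)).choose_spec
      show f (zc lam a - 1) = f (y ((hy2 _ (hremovable a ha)).choose))
      rw [← h3, hcontR a ha]
  -- part 1 : zero center
  have hcenter : ∑ k ∈ Finset.Icc 1 d, x k - ∑ k ∈ Finset.Icc 1 (d - 1), y k = 0 := by
    have h := sum_id lam N hN
    rw [← htransX (fun t => t), ← htransY (fun t => t)]
    simpa using h
  refine ⟨hcenter, ?_⟩
  -- part 2 : area
  have hsq : ∑ k ∈ Finset.Icc 1 d, (x k) ^ 2 - ∑ k ∈ Finset.Icc 1 (d - 1), (y k) ^ 2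
      = 2 * (lam.card : ℝ) := by
    have h := sum_sq lam N hN
    rw [← htransX (fun t => t ^ 2), ← htransY (fun t => t ^ 2)]
    simpa using h
  obtain ⟨n, rfl⟩ : ∃ n, d = n + 1 := ⟨d - 1, by omega⟩
  simp only [Nat.add_sub_cancel] at hcenter hsq ⊢
  rw [area_identity x y n, hcenter, hsq]
  norm_num
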